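/- arXiv:1810.11677 — 6 statements merged into one kernel-verified Lean document; each statement's English description precedes it below -/
import Mathlib

section
/- Let (Y,X,Z) have joint distribution Q⁰ = P_{YX} × e_{Z|X} for some channel e from X to Z (i.e., Y−X−Z form a Markov chain under Q⁰). Then the unique information UI(Y;X∖Z) evaluated at Q⁰ equals the conditional mutual information I_{Q⁰}(Y;X|Z). -/
open scoped BigOperators
open Real

noncomputable section

variable {W X Y Z : Type*}

/-- A channel (row-stochastic conditional distribution) from `X` to `Y`. -/
def IsChannel [Fintype Y] (k : X → Y → ℝ) : Prop :=
  (∀ x y, 0 ≤ k x y) ∧ ∀ x, ∑ y, k x y = 1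

/-- A probability distribution on a finite set. -/
def IsDist [Fintype X] (p : X → ℝ) : Prop :=
  (∀ x, 0 ≤ p x) ∧ ∑ x, p x = 1

/-- Composition of a decoder `d : Z → Y` with an encoder `e : X → Z`:
`(d ∘ e)(y|x) = ∑ z d(y|z) e(z|x)`. -/
def chComp [Fintype Z] (d : Z → Y → ℝ) (e : X → Z → ℝ) : X → Y → ℝ :=
  fun x y => ∑ z, d z y * e x z

/-- Conditional KL divergence `D(k ‖ l | pi) = ∑_x pi x ∑_y k(y|x) log (k(y|x)/l(y|x))`. -/
def condKL [Fintype X] [Fintype Y] (pi : X → ℝ) (k l : X → Y → ℝ) : ℝ :=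
  ∑ x, pi x * ∑ y, k x y * Real.log (k x y / l x y)

/-- Deficiency of a decoder `d` w.r.t. a channel `k`, weighted by `pi`:
the infimum over encoders `e` of `D(k ‖ d∘e | pi)`. -/
def deficiency [Fintype X] [Fintype Y] [Fintype Z]
    (pi : X → ℝ) (d : Z → Y → ℝ) (k : X → Y → ℝ) : ℝ :=
  sInf {r : ℝ | ∃ e : X → Z → ℝ, IsChannel e ∧ r = condKL pi k (chComp d e)}

/-- A joint probability mass function for a triple `(Y, X, Z)`. -/
def IsPMF3 [Fintype X] [Fintype Y] [Fintype Z] (p : Y → X → Z → ℝ) : Prop :=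
  (∀ y x z, 0 ≤ p y x z) ∧ ∑ y, ∑ x, ∑ z, p y x z = 1

def mYX [Fintype Z] (p : Y → X → Z → ℝ) : Y → X → ℝ := fun y x => ∑ z, p y x z
def mYZ [Fintype X] (p : Y → X → Z → ℝ) : Y → Z → ℝ := fun y z => ∑ x, p y x z
def mXZ [Fintype Y] (p : Y → X → Z → ℝ) : X → Z → ℝ := fun x z => ∑ y, p y x z
def mX  [Fintype Y] [Fintype Z] (p : Y → X → Z → ℝ) : X → ℝ := fun x => ∑ y, ∑ z, p y x z
def mY  [Fintype X] [Fintype Z] (p : Y → X → Z → ℝ) : Y → ℝ := fun y => ∑ x, ∑ z, p y x z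
def mZ  [Fintype X] [Fintype Y] (p : Y → X → Z → ℝ) : Z → ℝ := fun z => ∑ y, ∑ x, p y x z

/-- Mutual information of a bivariate joint distribution (in nats). -/
def MI2 [Fintype X] [Fintype Y] (q : X → Y → ℝ) : ℝ :=
  ∑ x, ∑ y, q x y * Real.log (q x y / ((∑ y', q x y') * (∑ x', q x' y)))

/-- `I(Y; (X,Z))` for a joint triple distribution (in nats). -/
def MI_Y_XZ [Fintype X] [Fintype Y] [Fintype Z] (p : Y → X → Z → ℝ) : ℝ :=
  ∑ y, ∑ x, ∑ z, p y x z * Real.log (p y x z / (mY p y * mXZ p x z))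

/-- Conditional mutual information `I(Y;X|Z)` (in nats). -/
def CMI_YX_gZ [Fintype X] [Fintype Y] [Fintype Z] (p : Y → X → Z → ℝ) : ℝ :=
  ∑ y, ∑ x, ∑ z, p y x z * Real.log ((p y x z * mZ p z) / (mYZ p y z * mXZ p x z))

/-- Conditional mutual information `I(Y;Z|X)` (in nats). -/
def CMI_YZ_gX [Fintype X] [Fintype Y] [Fintype Z] (p : Y → X → Z → ℝ) : ℝ :=
  ∑ y, ∑ x, ∑ z, p y x z * Real.log ((p y x z * mX p x) / (mYX p y x * mXZ p x z))

/-- The set `Δ_P` of joint distributions matching `p` on the `(Y,X)`- and `(Y,Z)`-marginals. -/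
def deltaP [Fintype X] [Fintype Y] [Fintype Z] (p : Y → X → Z → ℝ) : Set (Y → X → Z → ℝ) :=
  {q | IsPMF3 q ∧ mYX q = mYX p ∧ mYZ q = mYZ p}

/-- Unique information `UI(Y; X ∖ Z) = inf_{Q ∈ Δ_P} I_Q(Y;X|Z)`. -/
def UIX [Fintype X] [Fintype Y] [Fintype Z] (p : Y → X → Z → ℝ) : ℝ :=
  sInf {r : ℝ | ∃ q ∈ deltaP p, r = CMI_YX_gZ q}

/-- Unique information `UI(Y; Z ∖ X) = inf_{Q ∈ Δ_P} I_Q(Y;Z|X)`. -/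
def UIZ [Fintype X] [Fintype Y] [Fintype Z] (p : Y → X → Z → ℝ) : ℝ :=
  sInf {r : ℝ | ∃ q ∈ deltaP p, r = CMI_YZ_gX q}

/-- Shannon entropy (in nats). -/
def entropy [Fintype X] (p : X → ℝ) : ℝ := ∑ x, -(p x * Real.log (p x))

end


section AuxProof

variable {X Y Z : Type*} [Fintype X] [Fintype Y] [Fintype Z]

namespace UIAux

variable {q : Y → X → Z → ℝ}

lemma mYX_nonneg (h : ∀ y x z, 0 ≤ q y x z) (y : Y) (x : X) : 0 ≤ mYX q y x :=
  Finset.sum_nonneg fun _ _ => h _ _ _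

lemma mXZ_nonneg (h : ∀ y x z, 0 ≤ q y x z) (x : X) (z : Z) : 0 ≤ mXZ q x z :=
  Finset.sum_nonneg fun _ _ => h _ _ _

lemma le_mYX (h : ∀ y x z, 0 ≤ q y x z) (y : Y) (x : X) (z : Z) : q y x z ≤ mYX q y x :=
  Finset.single_le_sum (fun z _ => h y x z) (Finset.mem_univ z)

lemma le_mYZ (h : ∀ y x z, 0 ≤ q y x z) (y : Y) (x : X) (z : Z) : q y x z ≤ mYZ q y z :=
  Finset.single_le_sum (f := fun x => q y x z) (fun x _ => h y x z) (Finset.mem_univ x)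

lemma le_mXZ (h : ∀ y x z, 0 ≤ q y x z) (y : Y) (x : X) (z : Z) : q y x z ≤ mXZ q x z :=
  Finset.single_le_sum (f := fun y => q y x z) (fun y _ => h y x z) (Finset.mem_univ y)

lemma mY_eq (y : Y) : mY q y = ∑ x, mYX q y x := rfl
lemma mX_eq (x : X) : mX q x = ∑ y, mYX q y x := rfl
lemma mZ_eq (z : Z) : mZ q z = ∑ y, mYZ q y z := rfl

lemma mY_eq' (y : Y) : mY q y = ∑ z, mYZ q y z := by
  simp only [mY, mYZ]; exact Finset.sum_comm

lemma mX_eq' (x : X) : mX q x = ∑ z, mXZ q x z := by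
  simp only [mX, mXZ]; exact Finset.sum_comm

lemma le_mY (h : ∀ y x z, 0 ≤ q y x z) (y : Y) (x : X) (z : Z) : q y x z ≤ mY q y := by
  rw [mY_eq]
  exact le_trans (le_mYX h y x z)
    (Finset.single_le_sum (fun x _ => mYX_nonneg h y x) (Finset.mem_univ x))

lemma le_mX (h : ∀ y x z, 0 ≤ q y x z) (y : Y) (x : X) (z : Z) : q y x z ≤ mX q x := by
  rw [mX_eq]
  exact le_trans (le_mYX h y x z)
    (Finset.single_le_sum (fun y _ => mYX_nonneg h y x) (Finset.mem_univ y))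

lemma le_mZ (h : ∀ y x z, 0 ≤ q y x z) (y : Y) (x : X) (z : Z) : q y x z ≤ mZ q z := by
  rw [mZ_eq]
  refine le_trans (le_mYZ h y x z) ?_
  exact Finset.single_le_sum (f := fun y => mYZ q y z)
    (fun y _ => Finset.sum_nonneg fun x _ => h y x z) (Finset.mem_univ y)

lemma sum_mX (hq : IsPMF3 q) : ∑ x, mX q x = 1 := by
  rw [← hq.2]; exact Finset.sum_comm

/-- Nonnegativity of `I(Y;Z|X)`. -/
lemma CMI_YZ_gX_nonneg (hq : IsPMF3 q) : 0 ≤ CMI_YZ_gX q := by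
  obtain ⟨h0, hsum⟩ := hq
  set r : Y → X → Z → ℝ := fun y x z => mYX q y x * mXZ q x z / mX q x with hr
  have hterm : ∀ y x z, q y x z - r y x z ≤
      q y x z * Real.log ((q y x z * mX q x) / (mYX q y x * mXZ q x z)) := by
    intro y x z
    rcases eq_or_lt_of_le (h0 y x z) with hq0 | hq0
    · rw [← hq0]
      simp only [zero_mul, zero_sub, neg_nonpos]
      exact div_nonneg (mul_nonneg (mYX_nonneg h0 y x) (mXZ_nonneg h0 x z))
        (le_trans (h0 y x z) (le_mX h0 y x z))
    · have hYX : 0 < mYX q y x := lt_of_lt_of_le hq0 (le_mYX h0 y x z)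
      have hXZ : 0 < mXZ q x z := lt_of_lt_of_le hq0 (le_mXZ h0 y x z)
      have hX : 0 < mX q x := lt_of_lt_of_le hq0 (le_mX h0 y x z)
      have hrpos : 0 < r y x z := div_pos (mul_pos hYX hXZ) hX
      have harg : (q y x z * mX q x) / (mYX q y x * mXZ q x z) = q y x z / r y x z := by
        rw [hr]; field_simp
      rw [harg]
      have hlog : Real.log (r y x z / q y x z) ≤ r y x z / q y x z - 1 :=
        Real.log_le_sub_one_of_pos (div_pos hrpos hq0)
      have hneg : Real.log (q y x z / r y x z) = - Real.log (r y x z / q y x z) := by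
        rw [← Real.log_inv, inv_div]
      rw [hneg, mul_neg]
      have h2 := mul_le_mul_of_nonneg_left hlog hq0.le
      have h3 : q y x z * (r y x z / q y x z - 1) = r y x z - q y x z := by
        rw [mul_sub, mul_div_cancel₀ _ hq0.ne']; ring
      linarith [h2, h3]
  have hsumr : ∑ y, ∑ x, ∑ z, r y x z ≤ 1 := by
    have h1 : ∑ y, ∑ x, ∑ z, r y x z = ∑ x, ∑ y, ∑ z, r y x z := Finset.sum_comm
    have h2 : ∀ x : X, ∑ y, ∑ z, r y x z = mX q x * mX q x / mX q x := by
      intro x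
      have hinner : ∀ y : Y, ∑ z, r y x z = mYX q y x * (∑ z, mXZ q x z) / mX q x := by
        intro y
        rw [Finset.mul_sum, Finset.sum_div]
      calc ∑ y, ∑ z, r y x z
          = ∑ y, mYX q y x * (∑ z, mXZ q x z) / mX q x :=
            Finset.sum_congr rfl fun y _ => hinner y
        _ = (∑ y, mYX q y x) * (∑ z, mXZ q x z) / mX q x := by
            rw [← Finset.sum_div, ← Finset.sum_mul]
        _ = mX q x * mX q x / mX q x := by rw [← mX_eq, ← mX_eq']
    rw [h1]
    calc ∑ x, ∑ y, ∑ z, r y x z = ∑ x, mX q x * mX q x / mX q x := by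
          exact Finset.sum_congr rfl fun x _ => h2 x
      _ ≤ ∑ x, mX q x := by
          refine Finset.sum_le_sum fun x _ => ?_
          have hX0 : 0 ≤ mX q x :=
            Finset.sum_nonneg fun y _ => Finset.sum_nonneg fun z _ => h0 y x z
          rcases eq_or_lt_of_le hX0 with h | h
          · rw [← h]; simp
          · rw [mul_div_assoc, div_self h.ne', mul_one]
      _ = 1 := sum_mX ⟨h0, hsum⟩
  calc (0:ℝ) = 1 - 1 := by ring
    _ ≤ (∑ y, ∑ x, ∑ z, q y x z) - ∑ y, ∑ x, ∑ z, r y x z := by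
        rw [hsum]; linarith [hsumr]
    _ = ∑ y, ∑ x, ∑ z, (q y x z - r y x z) := by simp [Finset.sum_sub_distrib]
    _ ≤ CMI_YZ_gX q := by
        refine Finset.sum_le_sum fun y _ => Finset.sum_le_sum fun x _ => Finset.sum_le_sum fun z _ => hterm y x z

end UIAux

end AuxProof

section AuxProof2

variable {X Y Z : Type*} [Fintype X] [Fintype Y] [Fintype Z]

namespace UIAux

variable {q : Y → X → Z → ℝ}

/-- Chain-rule identity: `I(Y;X|Z) = I(Y;Z|X) + I(Y;X) - I(Y;Z)`. -/
lemma chain_rule (h0 : ∀ y x z, 0 ≤ q y x z) :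
    CMI_YX_gZ q = CMI_YZ_gX q + MI2 (mYX q) - MI2 (mYZ q) := by
  have hMIX : MI2 (mYX q) =
      ∑ y, ∑ x, ∑ z, q y x z * Real.log (mYX q y x / (mY q y * mX q x)) := by
    unfold MI2
    refine Finset.sum_congr rfl fun y _ => Finset.sum_congr rfl fun x _ => ?_
    rw [← mY_eq, ← mX_eq, mYX, Finset.sum_mul]
  have hMIZ : MI2 (mYZ q) =
      ∑ y, ∑ x, ∑ z, q y x z * Real.log (mYZ q y z / (mY q y * mZ q z)) := by
    unfold MI2
    rw [Finset.sum_congr rfl fun y (_ : y ∈ Finset.univ) => (Finset.sum_comm :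
      (∑ x, ∑ z, q y x z * Real.log (mYZ q y z / (mY q y * mZ q z))) = _)]
    refine Finset.sum_congr rfl fun y _ => Finset.sum_congr rfl fun z _ => ?_
    rw [← mY_eq', ← mZ_eq, mYZ, Finset.sum_mul]
  rw [hMIX, hMIZ]
  unfold CMI_YX_gZ CMI_YZ_gX
  rw [← Finset.sum_add_distrib, ← Finset.sum_sub_distrib]
  simp only [← Finset.sum_add_distrib, ← Finset.sum_sub_distrib]
  refine Finset.sum_congr rfl fun y _ => Finset.sum_congr rfl fun x _ =>
    Finset.sum_congr rfl fun z _ => ?_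
  rcases eq_or_lt_of_le (h0 y x z) with hq0 | hq0
  · rw [← hq0]; ring
  · have hYX : 0 < mYX q y x := lt_of_lt_of_le hq0 (le_mYX h0 y x z)
    have hYZ : 0 < mYZ q y z := lt_of_lt_of_le hq0 (le_mYZ h0 y x z)
    have hXZ : 0 < mXZ q x z := lt_of_lt_of_le hq0 (le_mXZ h0 y x z)
    have hX : 0 < mX q x := lt_of_lt_of_le hq0 (le_mX h0 y x z)
    have hY : 0 < mY q y := lt_of_lt_of_le hq0 (le_mY h0 y x z)
    have hZ : 0 < mZ q z := lt_of_lt_of_le hq0 (le_mZ h0 y x z)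
    rw [Real.log_div (mul_pos hq0 hZ).ne' (mul_pos hYZ hXZ).ne',
        Real.log_div (mul_pos hq0 hX).ne' (mul_pos hYX hXZ).ne',
        Real.log_div hYX.ne' (mul_pos hY hX).ne',
        Real.log_div hYZ.ne' (mul_pos hY hZ).ne',
        Real.log_mul hq0.ne' hZ.ne', Real.log_mul hq0.ne' hX.ne',
        Real.log_mul hYZ.ne' hXZ.ne', Real.log_mul hYX.ne' hXZ.ne',
        Real.log_mul hY.ne' hX.ne', Real.log_mul hY.ne' hZ.ne']
    ring

/-- Under the Markov condition, `I(Y;Z|X) = 0`. -/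
lemma CMI_YZ_gX_markov {p : Y → X → Z → ℝ} (h0 : ∀ y x z, 0 ≤ p y x z)
    {e : X → Z → ℝ} (he : IsChannel e)
    (hmarkov : ∀ y x z, p y x z = mYX p y x * e x z) :
    CMI_YZ_gX p = 0 := by
  unfold CMI_YZ_gX
  refine Finset.sum_eq_zero fun y _ => Finset.sum_eq_zero fun x _ =>
    Finset.sum_eq_zero fun z _ => ?_
  rcases eq_or_lt_of_le (h0 y x z) with hq0 | hq0
  · rw [← hq0, zero_mul]
  · have hYX : 0 < mYX p y x := lt_of_lt_of_le hq0 (le_mYX h0 y x z)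
    have hX : 0 < mX p x := lt_of_lt_of_le hq0 (le_mX h0 y x z)
    have hexz : 0 < e x z := by
      by_contra h
      push_neg at h
      have : e x z = 0 := le_antisymm h (he.1 x z)
      rw [hmarkov y x z, this, mul_zero] at hq0
      exact lt_irrefl 0 hq0
    have hmXZ : mXZ p x z = mX p x * e x z := by
      unfold mXZ
      rw [mX_eq, Finset.sum_mul]
      exact Finset.sum_congr rfl fun y' _ => hmarkov y' x z
    have : (p y x z * mX p x) / (mYX p y x * mXZ p x z) = 1 := by
      rw [hmarkov y x z, hmXZ]
      field_simp
    rw [this, Real.log_one, mul_zero]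

end UIAux

end AuxProof2


/-- for a zero-synergy distribution `Q⁰ = P_{YX} × e_{Z|X}` (Markov chain
`Y − X − Z`), the unique information `UI(Y;X∖Z)` equals `I_{Q⁰}(Y;X|Z)`. -/
theorem UI_eq_CMI_of_markov
    {X Y Z : Type*} [Fintype X] [Fintype Y] [Fintype Z]
    (p : Y → X → Z → ℝ) (hp : IsPMF3 p)
    (e : X → Z → ℝ) (he : IsChannel e)
    (hmarkov : ∀ y x z, p y x z = mYX p y x * e x z) :
    UIX p = CMI_YX_gZ p := by
  have hpΔ : p ∈ deltaP p := ⟨hp, rfl, rfl⟩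
  have hC0 : CMI_YZ_gX p = 0 := UIAux.CMI_YZ_gX_markov hp.1 he hmarkov
  have key : ∀ q ∈ deltaP p, CMI_YX_gZ p ≤ CMI_YX_gZ q := by
    intro q hq
    obtain ⟨hqpmf, h1, h2⟩ := hq
    have e1 := UIAux.chain_rule hqpmf.1
    have e2 := UIAux.chain_rule hp.1
    rw [h1, h2] at e1
    have hnn := UIAux.CMI_YZ_gX_nonneg hqpmf
    linarith [e1, e2, hnn, hC0]
  have hmem : CMI_YX_gZ p ∈ {r : ℝ | ∃ q ∈ deltaP p, r = CMI_YX_gZ q} := ⟨p, hpΔ, rfl⟩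
  refine le_antisymm (csInf_le ⟨CMI_YX_gZ p, ?_⟩ hmem) (le_csInf ⟨_, hmem⟩ ?_)
  · rintro r ⟨q, hq, rfl⟩
    exact key q hq
  · rintro r ⟨q, hq, rfl⟩
    exact key q hq
end

section
/- Let (Y,X,Z) ∼ Q⁰ = P_{YX} × e_{Z|X} form a Markov chain Y−X−Z. Then the shared information SI(Y;X,Z) := I(Y;X) − UI(Y;X∖Z) evaluated at Q⁰ equals I_{Q⁰}(Y;Z), and the complementary information CI(Y;X,Z) := I(Y;X|Z) − UI(Y;X∖Z) evaluated at Q⁰ equals 0, as does UI(Y;Z∖X). -/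
open scoped BigOperators
open Real

section MyAux
set_option linter.unusedSectionVars false

variable {X Y Z : Type*} [Fintype X] [Fintype Y] [Fintype Z]

lemma my_mYX_nonneg {q : Y → X → Z → ℝ} (h0 : ∀ y x z, 0 ≤ q y x z) (y : Y) (x : X) :
    0 ≤ mYX q y x := Finset.sum_nonneg fun _ _ => h0 _ _ _

lemma my_mYZ_nonneg {q : Y → X → Z → ℝ} (h0 : ∀ y x z, 0 ≤ q y x z) (y : Y) (z : Z) :
    0 ≤ mYZ q y z := Finset.sum_nonneg fun _ _ => h0 _ _ _

lemma my_mXZ_nonneg {q : Y → X → Z → ℝ} (h0 : ∀ y x z, 0 ≤ q y x z) (x : X) (z : Z) :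
    0 ≤ mXZ q x z := Finset.sum_nonneg fun _ _ => h0 _ _ _

lemma my_le_mYX {q : Y → X → Z → ℝ} (h0 : ∀ y x z, 0 ≤ q y x z) (y : Y) (x : X) (z : Z) :
    q y x z ≤ mYX q y x :=
  Finset.single_le_sum (fun z _ => h0 y x z) (Finset.mem_univ z)

lemma my_le_mYZ {q : Y → X → Z → ℝ} (h0 : ∀ y x z, 0 ≤ q y x z) (y : Y) (x : X) (z : Z) :
    q y x z ≤ mYZ q y z :=
  Finset.single_le_sum (fun x _ => h0 y x z) (Finset.mem_univ x)

lemma my_le_mXZ {q : Y → X → Z → ℝ} (h0 : ∀ y x z, 0 ≤ q y x z) (y : Y) (x : X) (z : Z) :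
    q y x z ≤ mXZ q x z :=
  Finset.single_le_sum (fun y _ => h0 y x z) (Finset.mem_univ y)

lemma my_le_mX {q : Y → X → Z → ℝ} (h0 : ∀ y x z, 0 ≤ q y x z) (y : Y) (x : X) (z : Z) :
    q y x z ≤ mX q x :=
  le_trans (my_le_mYX h0 y x z)
    (Finset.single_le_sum (fun y _ => my_mYX_nonneg h0 y x) (Finset.mem_univ y))

lemma my_le_mY {q : Y → X → Z → ℝ} (h0 : ∀ y x z, 0 ≤ q y x z) (y : Y) (x : X) (z : Z) :
    q y x z ≤ mY q y :=
  le_trans (my_le_mYX h0 y x z)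
    (Finset.single_le_sum (fun x _ => my_mYX_nonneg h0 y x) (Finset.mem_univ x))

lemma my_le_mZ {q : Y → X → Z → ℝ} (h0 : ∀ y x z, 0 ≤ q y x z) (y : Y) (x : X) (z : Z) :
    q y x z ≤ mZ q z :=
  le_trans (my_le_mYZ h0 y x z)
    (Finset.single_le_sum (fun y _ => my_mYZ_nonneg h0 y z) (Finset.mem_univ y))

end MyAux

section MyChain
set_option linter.unusedSectionVars false
variable {X Y Z : Type*} [Fintype X] [Fintype Y] [Fintype Z]

lemma my_chainA {q : Y → X → Z → ℝ} (h0 : ∀ y x z, 0 ≤ q y x z) :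
    MI_Y_XZ q = MI2 (mYZ q) + CMI_YX_gZ q := by
  have hmi2 : MI2 (mYZ q) =
      ∑ y, ∑ x, ∑ z, q y x z * Real.log (mYZ q y z / (mY q y * mZ q z)) := by
    unfold MI2
    have h1 : ∀ y, (∑ z', mYZ q y z') = mY q y := fun y => by unfold mYZ mY; rw [Finset.sum_comm]
    have h2 : ∀ z, (∑ y', mYZ q y' z) = mZ q z := fun z => rfl
    refine Finset.sum_congr rfl fun y _ => ?_
    rw [Finset.sum_comm]
    refine Finset.sum_congr rfl fun z _ => ?_
    rw [h1, h2, show (mYZ q y z : ℝ) = ∑ x, q y x z from rfl, Finset.sum_mul]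
  rw [hmi2]
  unfold MI_Y_XZ CMI_YX_gZ
  rw [← Finset.sum_add_distrib]
  refine Finset.sum_congr rfl fun y _ => ?_
  rw [← Finset.sum_add_distrib]
  refine Finset.sum_congr rfl fun x _ => ?_
  rw [← Finset.sum_add_distrib]
  refine Finset.sum_congr rfl fun z _ => ?_
  rcases eq_or_lt_of_le (h0 y x z) with h | h
  · simp [← h]
  · have hYZ := lt_of_lt_of_le h (my_le_mYZ h0 y x z)
    have hXZ := lt_of_lt_of_le h (my_le_mXZ h0 y x z)
    have hY := lt_of_lt_of_le h (my_le_mY h0 y x z)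
    have hZ := lt_of_lt_of_le h (my_le_mZ h0 y x z)
    have key : q y x z / (mY q y * mXZ q x z) =
        mYZ q y z / (mY q y * mZ q z) * (q y x z * mZ q z / (mYZ q y z * mXZ q x z)) := by
      field_simp
    rw [key, Real.log_mul (by positivity) (by positivity), mul_add]

lemma my_chainB {q : Y → X → Z → ℝ} (h0 : ∀ y x z, 0 ≤ q y x z) :
    MI_Y_XZ q = MI2 (mYX q) + CMI_YZ_gX q := by
  have hmi2 : MI2 (mYX q) =
      ∑ y, ∑ x, ∑ z, q y x z * Real.log (mYX q y x / (mY q y * mX q x)) := by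
    unfold MI2
    refine Finset.sum_congr rfl fun y _ => ?_
    refine Finset.sum_congr rfl fun x _ => ?_
    have h1 : (∑ x', mYX q y x') = mY q y := rfl
    have h2 : (∑ y', mYX q y' x) = mX q x := rfl
    rw [h1, h2, show (mYX q y x : ℝ) = ∑ z, q y x z from rfl, Finset.sum_mul]
  rw [hmi2]
  unfold MI_Y_XZ CMI_YZ_gX
  rw [← Finset.sum_add_distrib]
  refine Finset.sum_congr rfl fun y _ => ?_
  rw [← Finset.sum_add_distrib]
  refine Finset.sum_congr rfl fun x _ => ?_
  rw [← Finset.sum_add_distrib]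
  refine Finset.sum_congr rfl fun z _ => ?_
  rcases eq_or_lt_of_le (h0 y x z) with h | h
  · simp [← h]
  · have hYX := lt_of_lt_of_le h (my_le_mYX h0 y x z)
    have hXZ := lt_of_lt_of_le h (my_le_mXZ h0 y x z)
    have hY := lt_of_lt_of_le h (my_le_mY h0 y x z)
    have hX := lt_of_lt_of_le h (my_le_mX h0 y x z)
    have key : q y x z / (mY q y * mXZ q x z) =
        mYX q y x / (mY q y * mX q x) * (q y x z * mX q x / (mYX q y x * mXZ q x z)) := by
      field_simp
    rw [key, Real.log_mul (by positivity) (by positivity), mul_add]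

end MyChain

section MyNonneg
set_option linter.unusedSectionVars false
variable {X Y Z : Type*} [Fintype X] [Fintype Y] [Fintype Z]

/-- Gibbs-type term inequality. -/
lemma my_term_ge {a b : ℝ} (ha : 0 ≤ a) (hb : 0 ≤ b) (hab : 0 < a → 0 < b) :
    a - b ≤ a * Real.log (a / b) := by
  rcases eq_or_lt_of_le ha with h | h
  · simp [← h, hb]
  · have hb' := hab h
    have hlog : Real.log (b / a) ≤ b / a - 1 :=
      Real.log_le_sub_one_of_pos (div_pos hb' h)
    have h2 : a * Real.log (b / a) ≤ a * (b / a - 1) :=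
      mul_le_mul_of_nonneg_left hlog h.le
    have h3 : a * (b / a - 1) = b - a := by field_simp
    have h4 : Real.log (a / b) = - Real.log (b / a) := by
      rw [Real.log_div h.ne' hb'.ne', Real.log_div hb'.ne' h.ne']; ring
    rw [h4]; nlinarith [h2, h3]

lemma my_cmi_yz_gx_nonneg {q : Y → X → Z → ℝ} (hq : IsPMF3 q) :
    0 ≤ CMI_YZ_gX q := by
  obtain ⟨h0, h1⟩ := hq
  set b : Y → X → Z → ℝ := fun y x z => mYX q y x * mXZ q x z / mX q x with hb
  have hterm : ∀ y x z, q y x z - b y x z ≤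
      q y x z * Real.log ((q y x z * mX q x) / (mYX q y x * mXZ q x z)) := by
    intro y x z
    have hbnn : 0 ≤ b y x z :=
      div_nonneg (mul_nonneg (my_mYX_nonneg h0 y x) (my_mXZ_nonneg h0 x z))
        (le_trans (h0 y x z) (my_le_mX h0 y x z))
    have key : (q y x z * mX q x) / (mYX q y x * mXZ q x z) = q y x z / b y x z := by
      rw [hb]; rw [div_div_eq_mul_div]
    rw [key]
    refine my_term_ge (h0 y x z) hbnn fun hpos => ?_
    have hYX := lt_of_lt_of_le hpos (my_le_mYX h0 y x z)
    have hXZ := lt_of_lt_of_le hpos (my_le_mXZ h0 y x z)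
    have hX := lt_of_lt_of_le hpos (my_le_mX h0 y x z)
    positivity
  have hsumb : ∑ y, ∑ x, ∑ z, b y x z = 1 := by
    have hx : ∀ x, ∑ y, ∑ z, b y x z = mX q x := by
      intro x
      have : ∑ y, ∑ z, b y x z = (∑ y, mYX q y x) * ((∑ z, mXZ q x z) / mX q x) := by
        rw [Finset.sum_mul]
        refine Finset.sum_congr rfl fun y _ => ?_
        rw [Finset.sum_div, Finset.mul_sum]
        refine Finset.sum_congr rfl fun z _ => ?_
        rw [hb]; ring
      rw [this, show (∑ y, mYX q y x) = mX q x from rfl,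
        show (∑ z, mXZ q x z) = mX q x from by unfold mXZ mX; rw [Finset.sum_comm]]
      rcases eq_or_ne (mX q x) 0 with h | h
      · simp [h]
      · rw [div_self h, mul_one]
    rw [Finset.sum_comm]
    simp_rw [hx]
    rw [show (∑ x, mX q x) = ∑ x, ∑ y, ∑ z, q y x z from rfl, Finset.sum_comm, h1]
  have := Finset.sum_le_sum (fun y (_ : y ∈ Finset.univ) =>
    Finset.sum_le_sum (fun x (_ : x ∈ Finset.univ) =>
      Finset.sum_le_sum fun z (_ : z ∈ Finset.univ) => hterm y x z))
  unfold CMI_YZ_gX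
  calc (0:ℝ) = 1 - 1 := by ring
    _ = (∑ y, ∑ x, ∑ z, q y x z) - ∑ y, ∑ x, ∑ z, b y x z := by rw [h1, hsumb]
    _ = ∑ y, ∑ x, ∑ z, (q y x z - b y x z) := by
        simp [Finset.sum_sub_distrib]
    _ ≤ _ := this

end MyNonneg

section MyMarkov
set_option linter.unusedSectionVars false
variable {X Y Z : Type*} [Fintype X] [Fintype Y] [Fintype Z]

lemma my_mXZ_eq {p : Y → X → Z → ℝ} (e : X → Z → ℝ)
    (hmarkov : ∀ y x z, p y x z = mYX p y x * e x z) (x : X) (z : Z) :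
    mXZ p x z = mX p x * e x z := by
  unfold mXZ
  simp_rw [hmarkov]
  rw [← Finset.sum_mul]
  rfl

lemma my_cmi_yz_gx_zero {p : Y → X → Z → ℝ} (hp : IsPMF3 p) (e : X → Z → ℝ)
    (he : IsChannel e) (hmarkov : ∀ y x z, p y x z = mYX p y x * e x z) :
    CMI_YZ_gX p = 0 := by
  obtain ⟨h0, _⟩ := hp
  unfold CMI_YZ_gX
  refine Finset.sum_eq_zero fun y _ => Finset.sum_eq_zero fun x _ =>
    Finset.sum_eq_zero fun z _ => ?_
  rcases eq_or_lt_of_le (h0 y x z) with h | h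
  · simp [← h]
  · have hYX := lt_of_lt_of_le h (my_le_mYX h0 y x z)
    have hX := lt_of_lt_of_le h (my_le_mX h0 y x z)
    have he' : 0 < e x z := by
      have := h
      rw [hmarkov] at this
      rcases (mul_pos_iff.mp this) with ⟨_, h2⟩ | ⟨h2, _⟩
      · exact h2
      · linarith [he.1 x z]
    have : (p y x z * mX p x) / (mYX p y x * mXZ p x z) = 1 := by
      rw [my_mXZ_eq e hmarkov, hmarkov y x z]
      field_simp
    rw [this, Real.log_one, mul_zero]

lemma my_cmi_yx_gz_markov {p : Y → X → Z → ℝ} (hp : IsPMF3 p) (e : X → Z → ℝ)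
    (he : IsChannel e) (hmarkov : ∀ y x z, p y x z = mYX p y x * e x z) :
    CMI_YX_gZ p = MI2 (mYX p) - MI2 (mYZ p) := by
  have hA := my_chainA hp.1
  have hB := my_chainB hp.1
  have h0 := my_cmi_yz_gx_zero hp e he hmarkov
  linarith

end MyMarkov



/-- for a zero-synergy distribution `Q⁰ = P_{YX} × e_{Z|X}`,
`SI(Y;X,Z) = I(Y;Z)`, `CI(Y;X,Z) = 0` and `UI(Y;Z∖X) = 0`. -/
theorem SI_CI_of_markov
    {X Y Z : Type*} [Fintype X] [Fintype Y] [Fintype Z]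
    (p : Y → X → Z → ℝ) (hp : IsPMF3 p)
    (e : X → Z → ℝ) (he : IsChannel e)
    (hmarkov : ∀ y x z, p y x z = mYX p y x * e x z) :
    MI2 (mYX p) - UIX p = MI2 (mYZ p) ∧
    CMI_YX_gZ p - UIX p = 0 ∧
    UIZ p = 0 := by
  have hpmem : p ∈ deltaP p := ⟨hp, rfl, rfl⟩
  have hcmi : CMI_YX_gZ p = MI2 (mYX p) - MI2 (mYZ p) :=
    my_cmi_yx_gz_markov hp e he hmarkov
  -- lower bound for CMI_YX_gZ over deltaP
  have hlow : ∀ q ∈ deltaP p, CMI_YX_gZ p ≤ CMI_YX_gZ q := by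
    intro q hq
    obtain ⟨hq1, hq2, hq3⟩ := hq
    have hA := my_chainA hq1.1
    have hB := my_chainB hq1.1
    have hnn := my_cmi_yz_gx_nonneg hq1
    have e1 : MI2 (mYX q) = MI2 (mYX p) := by rw [hq2]
    have e2 : MI2 (mYZ q) = MI2 (mYZ p) := by rw [hq3]
    rw [hcmi]
    linarith
  have hUIX : UIX p = CMI_YX_gZ p := by
    unfold UIX
    apply le_antisymm
    · exact csInf_le ⟨CMI_YX_gZ p, by rintro r ⟨q, hq, rfl⟩; exact hlow q hq⟩
        ⟨p, hpmem, rfl⟩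
    · exact le_csInf ⟨CMI_YX_gZ p, p, hpmem, rfl⟩
        (by rintro r ⟨q, hq, rfl⟩; exact hlow q hq)
  have hUIZ : UIZ p = 0 := by
    unfold UIZ
    apply le_antisymm
    · refine csInf_le ⟨0, ?_⟩ ⟨p, hpmem, (my_cmi_yz_gx_zero hp e he hmarkov).symm⟩
      rintro r ⟨q, hq, rfl⟩
      exact my_cmi_yz_gx_nonneg hq.1
    · refine le_csInf ⟨CMI_YZ_gX p, p, hpmem, rfl⟩ ?_
      rintro r ⟨q, hq, rfl⟩
      exact my_cmi_yz_gx_nonneg hq.1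
  refine ⟨?_, ?_, hUIZ⟩
  · rw [hUIX, hcmi]; ring
  · rw [hUIX]; ring
end

section
/- Let δ^X and δ^Z be nonnegative reals satisfying δ^X ≤ min{I(Y;X), I(Y;X|Z)} and δ^Z ≤ min{I(Y;Z), I(Y;Z|X)} for a joint distribution of finite random variables (Y,X,Z). Define ŨI(Y;X∖Z) = max{δ^X, δ^Z + I(Y;X) − I(Y;Z)}, ŨI(Y;Z∖X) = max{δ^Z, δ^X + I(Y;Z) − I(Y;X)}, S̃I = min{I(Y;X) − δ^X, I(Y;Z) − δ^Z}, C̃I = min{I(Y;X|Z) − δ^X, I(Y;Z|X) − δ^Z}. Then all four quantities are nonnegative and satisfy: I(Y;X) = ŨI(Y;X∖Z) + S̃I, I(Y;X|Z) = ŨI(Y;X∖Z) + C̃I, and I(Y;XZ) = ŨI(Y;X∖Z) + ŨI(Y;Z∖X) + S̃I + C̃I. -/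
open scoped BigOperators
open Real

section ChainRule

variable {X Y Z : Type*} [Fintype X] [Fintype Y] [Fintype Z]

lemma aux_pos_mYX (p : Y → X → Z → ℝ) (h0 : ∀ y x z, 0 ≤ p y x z)
    {y : Y} {x : X} {z : Z} (hpos : 0 < p y x z) : 0 < mYX p y x :=
  lt_of_lt_of_le hpos (Finset.single_le_sum (fun z _ => h0 y x z) (Finset.mem_univ z))

lemma aux_pos_mYZ (p : Y → X → Z → ℝ) (h0 : ∀ y x z, 0 ≤ p y x z)
    {y : Y} {x : X} {z : Z} (hpos : 0 < p y x z) : 0 < mYZ p y z :=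
  lt_of_lt_of_le hpos (Finset.single_le_sum (fun x _ => h0 y x z) (Finset.mem_univ x))

lemma aux_pos_mXZ (p : Y → X → Z → ℝ) (h0 : ∀ y x z, 0 ≤ p y x z)
    {y : Y} {x : X} {z : Z} (hpos : 0 < p y x z) : 0 < mXZ p x z :=
  lt_of_lt_of_le hpos (Finset.single_le_sum (fun y _ => h0 y x z) (Finset.mem_univ y))

lemma aux_pos_mY (p : Y → X → Z → ℝ) (h0 : ∀ y x z, 0 ≤ p y x z)
    {y : Y} {x : X} {z : Z} (hpos : 0 < p y x z) : 0 < mY p y := by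
  refine lt_of_lt_of_le (aux_pos_mYX p h0 hpos) ?_
  exact Finset.single_le_sum
    (fun x _ => Finset.sum_nonneg fun z _ => h0 y x z) (Finset.mem_univ x)

lemma aux_pos_mX (p : Y → X → Z → ℝ) (h0 : ∀ y x z, 0 ≤ p y x z)
    {y : Y} {x : X} {z : Z} (hpos : 0 < p y x z) : 0 < mX p x := by
  have h1 : 0 < ∑ z, p y x z := aux_pos_mYX p h0 hpos
  refine lt_of_lt_of_le h1 ?_
  exact Finset.single_le_sum
    (fun y _ => Finset.sum_nonneg fun z _ => h0 y x z) (Finset.mem_univ y)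

lemma aux_pos_mZ (p : Y → X → Z → ℝ) (h0 : ∀ y x z, 0 ≤ p y x z)
    {y : Y} {x : X} {z : Z} (hpos : 0 < p y x z) : 0 < mZ p z := by
  have h1 : 0 < ∑ x, p y x z := aux_pos_mYZ p h0 hpos
  refine lt_of_lt_of_le h1 ?_
  exact Finset.single_le_sum
    (fun y _ => Finset.sum_nonneg fun x _ => h0 y x z) (Finset.mem_univ y)

/-- Chain rule: `I(Y;XZ) = I(Y;X) + I(Y;Z|X)`. -/
lemma chain_YX (p : Y → X → Z → ℝ) (hp : IsPMF3 p) :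
    MI_Y_XZ p = MI2 (mYX p) + CMI_YZ_gX p := by
  have h0 := hp.1
  unfold MI_Y_XZ MI2 CMI_YZ_gX
  rw [← Finset.sum_add_distrib]
  refine Finset.sum_congr rfl fun y _ => ?_
  rw [← Finset.sum_add_distrib]
  refine Finset.sum_congr rfl fun x _ => ?_
  have hm1 : (∑ y', mYX p y y') = mY p y := rfl
  have hm2 : (∑ x', mYX p x' x) = mX p x := rfl
  rw [hm1, hm2]
  have hsplit : mYX p y x * Real.log (mYX p y x / (mY p y * mX p x))
      = ∑ z, p y x z * Real.log (mYX p y x / (mY p y * mX p x)) := by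
    simp only [mYX]; rw [Finset.sum_mul]
  rw [hsplit, ← Finset.sum_add_distrib]
  refine Finset.sum_congr rfl fun z _ => ?_
  rcases eq_or_lt_of_le (h0 y x z) with h | h
  · simp [← h]
  have hYX := aux_pos_mYX p h0 h
  have hXZ := aux_pos_mXZ p h0 h
  have hY := aux_pos_mY p h0 (y := y) (x := x) (z := z) h
  have hX := aux_pos_mX p h0 (y := y) (x := x) (z := z) h
  rw [show p y x z / (mY p y * mXZ p x z)
      = (mYX p y x / (mY p y * mX p x)) * (p y x z * mX p x / (mYX p y x * mXZ p x z)) by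
        field_simp]
  rw [Real.log_mul (by positivity) (by positivity), mul_add]

/-- Chain rule: `I(Y;XZ) = I(Y;Z) + I(Y;X|Z)`. -/
lemma chain_YZ (p : Y → X → Z → ℝ) (hp : IsPMF3 p) :
    MI_Y_XZ p = MI2 (mYZ p) + CMI_YX_gZ p := by
  have h0 := hp.1
  unfold MI_Y_XZ MI2 CMI_YX_gZ
  rw [← Finset.sum_add_distrib]
  refine Finset.sum_congr rfl fun y _ => ?_
  have hm1 : ∀ y, (∑ z', mYZ p y z') = mY p y := by
    intro y; rw [mY]; exact Finset.sum_comm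
  have hm2 : ∀ z, (∑ y', mYZ p y' z) = mZ p z := fun z => rfl
  calc ∑ x, ∑ z, p y x z * Real.log (p y x z / (mY p y * mXZ p x z))
      = ∑ z, ∑ x, p y x z * Real.log (p y x z / (mY p y * mXZ p x z)) :=
        Finset.sum_comm
    _ = ∑ z, ∑ x, (p y x z * Real.log (mYZ p y z / (mY p y * mZ p z))
          + p y x z * Real.log (p y x z * mZ p z / (mYZ p y z * mXZ p x z))) := by
        refine Finset.sum_congr rfl fun z _ => Finset.sum_congr rfl fun x _ => ?_
        rcases eq_or_lt_of_le (h0 y x z) with h | h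
        · simp [← h]
        have hYZ := aux_pos_mYZ p h0 h
        have hXZ := aux_pos_mXZ p h0 h
        have hY := aux_pos_mY p h0 (y := y) (x := x) (z := z) h
        have hZ := aux_pos_mZ p h0 (y := y) (x := x) (z := z) h
        rw [show p y x z / (mY p y * mXZ p x z)
            = (mYZ p y z / (mY p y * mZ p z)) * (p y x z * mZ p z / (mYZ p y z * mXZ p x z)) by
              field_simp]
        rw [Real.log_mul (by positivity) (by positivity), mul_add]
    _ = (∑ z, mYZ p y z * Real.log (mYZ p y z / ((∑ z', mYZ p y z') * (∑ y', mYZ p y' z))))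
          + ∑ x, ∑ z, p y x z * Real.log (p y x z * mZ p z / (mYZ p y z * mXZ p x z)) := by
        simp only [Finset.sum_add_distrib]
        congr 1
        · refine Finset.sum_congr rfl fun z _ => ?_
          rw [hm1, hm2, ← Finset.sum_mul]; rfl
        · exact Finset.sum_comm

end ChainRule

/-- any pair of nonnegative reals `dX, dZ` bounded by
`min{I(Y;X), I(Y;X|Z)}` resp. `min{I(Y;Z), I(Y;Z|X)}` induces a nonnegative
information decomposition satisfying the required identities. -/
theorem tilde_decomposition
    {X Y Z : Type*} [Fintype X] [Fintype Y] [Fintype Z]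
    (p : Y → X → Z → ℝ) (hp : IsPMF3 p)
    (dX dZ : ℝ) (hdX0 : 0 ≤ dX) (hdZ0 : 0 ≤ dZ)
    (hdX : dX ≤ min (MI2 (mYX p)) (CMI_YX_gZ p))
    (hdZ : dZ ≤ min (MI2 (mYZ p)) (CMI_YZ_gX p)) :
    0 ≤ max dX (dZ + MI2 (mYX p) - MI2 (mYZ p)) ∧
    0 ≤ max dZ (dX + MI2 (mYZ p) - MI2 (mYX p)) ∧
    0 ≤ min (MI2 (mYX p) - dX) (MI2 (mYZ p) - dZ) ∧
    0 ≤ min (CMI_YX_gZ p - dX) (CMI_YZ_gX p - dZ) ∧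
    MI2 (mYX p) =
      max dX (dZ + MI2 (mYX p) - MI2 (mYZ p)) +
        min (MI2 (mYX p) - dX) (MI2 (mYZ p) - dZ) ∧
    CMI_YX_gZ p =
      max dX (dZ + MI2 (mYX p) - MI2 (mYZ p)) +
        min (CMI_YX_gZ p - dX) (CMI_YZ_gX p - dZ) ∧
    MI_Y_XZ p =
      max dX (dZ + MI2 (mYX p) - MI2 (mYZ p)) +
        max dZ (dX + MI2 (mYZ p) - MI2 (mYX p)) +
        min (MI2 (mYX p) - dX) (MI2 (mYZ p) - dZ) +
        min (CMI_YX_gZ p - dX) (CMI_YZ_gX p - dZ) := by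
  have h1 := chain_YX p hp
  have h2 := chain_YZ p hp
  have hAX : dX ≤ MI2 (mYX p) := hdX.trans (min_le_left _ _)
  have hCX : dX ≤ CMI_YX_gZ p := hdX.trans (min_le_right _ _)
  have hBZ : dZ ≤ MI2 (mYZ p) := hdZ.trans (min_le_left _ _)
  have hDZ : dZ ≤ CMI_YZ_gX p := hdZ.trans (min_le_right _ _)
  rcases le_total (dZ + MI2 (mYX p) - MI2 (mYZ p)) dX with h | h
  · rw [max_eq_left h, max_eq_right (by linarith), min_eq_left (by linarith),
      min_eq_left (by linarith : CMI_YX_gZ p - dX ≤ CMI_YZ_gX p - dZ)]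
    exact ⟨hdX0, by linarith, by linarith, by linarith, by ring, by ring, by linarith⟩
  · rw [max_eq_right h, max_eq_left (by linarith), min_eq_right (by linarith),
      min_eq_right (by linarith : CMI_YZ_gX p - dZ ≤ CMI_YX_gZ p - dX)]
    exact ⟨by linarith, hdZ0, by linarith, by linarith, by ring, by linarith, by linarith⟩
end

section
/- Let (Y,X,Z) be finite random variables with joint distribution P, let κ = P_{Y|X}, d = P_{Y|Z}, π = P_X. Then the deficiency satisfies δ^π(d,κ) ≤ I(Y;X|Z). -/
open scoped BigOperators
open Real

/-- `log x ≥ 1 - 1/x` for `x > 0`. -/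
lemma log_lb {x : ℝ} (hx : 0 < x) : 1 - 1/x ≤ Real.log x := by
  have h := Real.log_le_sub_one_of_pos (show (0:ℝ) < 1/x by positivity)
  rw [one_div, Real.log_inv] at h
  have : 1/x = x⁻¹ := one_div x
  linarith [this]

/-- Log-sum inequality. -/
lemma log_sum_ineq {ι : Type*} (s : Finset ι) (a b : ι → ℝ)
    (ha : ∀ i ∈ s, 0 ≤ a i) (hb : ∀ i ∈ s, 0 ≤ b i)
    (hab : ∀ i ∈ s, b i = 0 → a i = 0) :
    (∑ i ∈ s, a i) * Real.log ((∑ i ∈ s, a i) / (∑ i ∈ s, b i)) ≤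
      ∑ i ∈ s, a i * Real.log (a i / b i) := by
  set S := ∑ i ∈ s, a i with hS
  set T := ∑ i ∈ s, b i with hT
  rcases eq_or_lt_of_le (Finset.sum_nonneg ha) with h0 | hSpos
  · -- S = 0, so all a i = 0
    have hall : ∀ i ∈ s, a i = 0 := by
      intro i hi
      exact (Finset.sum_eq_zero_iff_of_nonneg ha).mp h0.symm i hi
    have : S = 0 := h0.symm
    rw [this, zero_mul]
    apply Finset.sum_nonneg
    intro i hi
    rw [hall i hi, zero_mul]
  · -- S > 0
    have hTpos : 0 < T := by
      obtain ⟨i, hi, hai⟩ : ∃ i ∈ s, 0 < a i := by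
        by_contra h
        push_neg at h
        have : S ≤ 0 := Finset.sum_nonpos (fun i hi => h i hi)
        linarith
      have hbi : 0 < b i := by
        rcases eq_or_lt_of_le (hb i hi) with h | h
        · exact absurd (hab i hi h.symm) (by linarith)
        · exact h
      exact Finset.sum_pos' hb ⟨i, hi, hbi⟩
    have key : ∀ i ∈ s, a i * Real.log (S/T) + a i - b i * (S/T) ≤
        a i * Real.log (a i / b i) := by
      intro i hi
      rcases eq_or_lt_of_le (ha i hi) with h0 | hai
      · rw [← h0]
        have : 0 ≤ b i * (S/T) := mul_nonneg (hb i hi) (by positivity)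
        simp only [zero_mul]
        linarith
      · have hbi : 0 < b i := by
          rcases eq_or_lt_of_le (hb i hi) with h | h
          · exact absurd (hab i hi h.symm) (by linarith)
          · exact h
        have hu : (0:ℝ) < (a i * T) / (b i * S) := by positivity
        have hlog : Real.log (a i / b i) = Real.log (S/T) + Real.log ((a i * T)/(b i * S)) := by
          rw [← Real.log_mul (by positivity) (by positivity)]
          congr 1
          rw [div_mul_div_comm, div_eq_div_iff hbi.ne' (mul_pos hTpos (mul_pos hbi hSpos)).ne']
          ring
        have hlb := log_lb hu
        have hinv : 1 / ((a i * T) / (b i * S)) = (b i * S)/(a i * T) := by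
          rw [one_div, inv_div]
        rw [hinv] at hlb
        have h2 : a i * (1 - (b i * S)/(a i * T)) ≤ a i * Real.log ((a i * T)/(b i * S)) :=
          mul_le_mul_of_nonneg_left hlb hai.le
        have h3 : a i * (1 - (b i * S)/(a i * T)) = a i - b i * (S/T) := by
          field_simp
        rw [hlog, mul_add]
        linarith
    have hsum : ∑ i ∈ s, (a i * Real.log (S/T) + a i - b i * (S/T))
        = S * Real.log (S/T) + S - T * (S/T) := by
      rw [Finset.sum_sub_distrib, Finset.sum_add_distrib, ← Finset.sum_mul, ← Finset.sum_mul]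
    have hTS : T * (S/T) = S := by field_simp
    have hkeysum := Finset.sum_le_sum key
    rw [hsum, hTS] at hkeysum
    linarith


/-- for `k = P_{Y|X}`, `d = P_{Y|Z}`, `pi = P_X` induced by a joint
distribution `p` of `(Y,X,Z)`, the deficiency satisfies `δ^π(d,k) ≤ I(Y;X|Z)`. -/
theorem deficiency_le_CMI
    {X Y Z : Type*} [Fintype X] [Fintype Y] [Fintype Z]
    (p : Y → X → Z → ℝ) (hp : IsPMF3 p)
    (hX : ∀ x, 0 < mX p x) (hZ : ∀ z, 0 < mZ p z) :
    deficiency (mX p) (fun z y => mYZ p y z / mZ p z) (fun x y => mYX p y x / mX p x)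
      ≤ CMI_YX_gZ p := by
  classical
  obtain ⟨hpnn, hpsum⟩ := hp
  set d : Z → Y → ℝ := fun z y => mYZ p y z / mZ p z with hd
  set k : X → Y → ℝ := fun x y => mYX p y x / mX p x with hk
  -- basic marginal facts
  have hmYXnn : ∀ y x, 0 ≤ mYX p y x := fun y x => Finset.sum_nonneg fun z _ => hpnn y x z
  have hmYZnn : ∀ y z, 0 ≤ mYZ p y z := fun y z => Finset.sum_nonneg fun x _ => hpnn y x z
  have hmXZnn : ∀ x z, 0 ≤ mXZ p x z := fun x z => Finset.sum_nonneg fun y _ => hpnn y x z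
  have hsumYX : ∀ x, ∑ y, mYX p y x = mX p x := fun x => rfl
  have hsumYZ : ∀ z, ∑ y, mYZ p y z = mZ p z := by
    intro z
    simp only [mYZ, mZ]
  -- the chosen encoder
  set e : X → Z → ℝ := fun x z => mXZ p x z / mX p x with he
  have hech : IsChannel e := by
    constructor
    · intro x z
      exact div_nonneg (hmXZnn x z) (hX x).le
    · intro x
      rw [← Finset.sum_div]
      rw [div_eq_one_iff_eq (hX x).ne']
      simp only [mXZ, mX]
      rw [Finset.sum_comm]
  -- membership value
  have hmem : condKL (mX p) k (chComp d e) ∈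
      {r : ℝ | ∃ e : X → Z → ℝ, IsChannel e ∧ r = condKL (mX p) k (chComp d e)} :=
    ⟨e, hech, rfl⟩
  -- the set is bounded below by -(card Y)
  have hbdd : BddBelow {r : ℝ | ∃ e : X → Z → ℝ, IsChannel e ∧
      r = condKL (mX p) k (chComp d e)} := by
    refine ⟨-(Fintype.card Y : ℝ), ?_⟩
    rintro r ⟨e', ⟨he'nn, he'sum⟩, rfl⟩
    have hl_nn : ∀ x y, 0 ≤ chComp d e' x y := by
      intro x y
      apply Finset.sum_nonneg
      intro z _
      exact mul_nonneg (div_nonneg (hmYZnn y z) (hZ z).le) (he'nn x z)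
    have hl_le : ∀ x y, chComp d e' x y ≤ 1 := by
      intro x y
      have hsum1 : ∑ y', chComp d e' x y' = 1 := by
        unfold chComp
        rw [Finset.sum_comm]
        have : ∀ z, ∑ y', d z y' * e' x z = e' x z := by
          intro z
          rw [← Finset.sum_mul]
          have : ∑ y', d z y' = 1 := by
            simp only [hd, ← Finset.sum_div, hsumYZ z]
            exact div_self (hZ z).ne'
          rw [this, one_mul]
        rw [Finset.sum_congr rfl fun z _ => this z, he'sum x]
      calc chComp d e' x y ≤ ∑ y', chComp d e' x y' :=
            Finset.single_le_sum (fun y' _ => hl_nn x y') (Finset.mem_univ y)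
        _ = 1 := hsum1
    have hterm : ∀ x y, -1 ≤ k x y * Real.log (k x y / chComp d e' x y) := by
      intro x y
      have hknn : 0 ≤ k x y := div_nonneg (hmYXnn y x) (hX x).le
      rcases eq_or_lt_of_le hknn with h0 | hkpos
      · rw [← h0, zero_mul]; norm_num
      · rcases eq_or_lt_of_le (hl_nn x y) with hl0 | hlpos
        · rw [← hl0, div_zero, Real.log_zero, mul_zero]; norm_num
        · have hk1 : k x y ≤ 1 := by
            have : ∑ y', k x y' = 1 := by
              simp only [hk, ← Finset.sum_div, hsumYX x]
              exact div_self (hX x).ne'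
            calc k x y ≤ ∑ y', k x y' := Finset.single_le_sum
                  (fun y' _ => div_nonneg (hmYXnn y' x) (hX x).le) (Finset.mem_univ y)
              _ = 1 := this
          have hr : k x y ≤ k x y / chComp d e' x y := by
            rw [le_div_iff₀ hlpos]
            exact le_trans (mul_le_of_le_one_right hkpos.le (hl_le x y)) le_rfl
          have hlog1 : Real.log (k x y) ≤ Real.log (k x y / chComp d e' x y) :=
            Real.log_le_log hkpos hr
          have hlog2 : 1 - 1/(k x y) ≤ Real.log (k x y) := log_lb hkpos
          have : k x y * (1 - 1/(k x y)) ≤ k x y * Real.log (k x y / chComp d e' x y) :=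
            mul_le_mul_of_nonneg_left (le_trans hlog2 hlog1) hkpos.le
          have heq : k x y * (1 - 1/(k x y)) = k x y - 1 := by
            field_simp
          rw [heq] at this
          linarith
    unfold condKL
    have hin : ∀ x, -(Fintype.card Y : ℝ) ≤ ∑ y, k x y * Real.log (k x y / chComp d e' x y) := by
      intro x
      calc -(Fintype.card Y : ℝ) = ∑ _y : Y, (-1 : ℝ) := by
            rw [Finset.sum_const, Finset.card_univ]; simp
        _ ≤ _ := Finset.sum_le_sum fun y _ => hterm x y
    have hpiX : ∑ x, mX p x = 1 := by
      rw [← hpsum]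
      unfold mX
      rw [Finset.sum_comm]
    calc -(Fintype.card Y : ℝ) = ∑ x, mX p x * (-(Fintype.card Y : ℝ)) := by
          rw [← Finset.sum_mul, hpiX, one_mul]
      _ ≤ ∑ x, mX p x * ∑ y, k x y * Real.log (k x y / chComp d e' x y) :=
          Finset.sum_le_sum fun x _ => mul_le_mul_of_nonneg_left (hin x) (hX x).le
  refine le_trans (csInf_le hbdd hmem) ?_
  -- now show condKL (mX p) k (chComp d e) ≤ CMI_YX_gZ p
  -- T x y = ∑_z mYZ y z * mXZ x z / mZ z
  have hl_eq : ∀ x y, chComp d e x y = (∑ z, mYZ p y z * mXZ p x z / mZ p z) / mX p x := by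
    intro x y
    unfold chComp
    rw [Finset.sum_div]
    apply Finset.sum_congr rfl
    intro z _
    simp only [hd, he]
    field_simp
  have hinner : ∀ x, mX p x * ∑ y, k x y * Real.log (k x y / chComp d e x y)
      = ∑ y, mYX p y x * Real.log (mYX p y x / (∑ z, mYZ p y z * mXZ p x z / mZ p z)) := by
    intro x
    rw [Finset.mul_sum]
    apply Finset.sum_congr rfl
    intro y _
    rw [hl_eq x y]
    have hratio : k x y / ((∑ z, mYZ p y z * mXZ p x z / mZ p z) / mX p x)
        = mYX p y x / (∑ z, mYZ p y z * mXZ p x z / mZ p z) := by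
      simp only [hk]
      rcases eq_or_ne (∑ z, mYZ p y z * mXZ p x z / mZ p z) 0 with hB | hB
      · simp [hB]
      · field_simp
        rw [mul_div_assoc, div_self (hX x).ne', mul_one]
    rw [hratio]
    simp only [hk]
    rw [← mul_assoc, mul_comm (mX p x), div_mul_cancel₀ _ (hX x).ne']
  have hcond : condKL (mX p) k (chComp d e)
      = ∑ x, ∑ y, mYX p y x * Real.log (mYX p y x / (∑ z, mYZ p y z * mXZ p x z / mZ p z)) := by
    unfold condKL
    exact Finset.sum_congr rfl fun x _ => hinner x
  rw [hcond]
  -- rewrite CMI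
  have hCMI : CMI_YX_gZ p = ∑ x, ∑ y, ∑ z,
      p y x z * Real.log (p y x z / (mYZ p y z * mXZ p x z / mZ p z)) := by
    unfold CMI_YX_gZ
    rw [Finset.sum_comm]
    apply Finset.sum_congr rfl
    intro x _
    apply Finset.sum_congr rfl
    intro y _
    apply Finset.sum_congr rfl
    intro z _
    congr 2
    rw [div_div_eq_mul_div]
  rw [hCMI]
  apply Finset.sum_le_sum
  intro x _
  apply Finset.sum_le_sum
  intro y _
  have ha : ∀ z ∈ Finset.univ, 0 ≤ p y x z := fun z _ => hpnn y x z
  have hb : ∀ z ∈ Finset.univ, 0 ≤ mYZ p y z * mXZ p x z / mZ p z :=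
    fun z _ => div_nonneg (mul_nonneg (hmYZnn y z) (hmXZnn x z)) (hZ z).le
  have hab : ∀ z ∈ Finset.univ, mYZ p y z * mXZ p x z / mZ p z = 0 → p y x z = 0 := by
    intro z _ h
    rw [div_eq_zero_iff] at h
    rcases h with h | h
    · rcases mul_eq_zero.mp h with h | h
      · have := (Finset.sum_eq_zero_iff_of_nonneg (fun x' _ => hpnn y x' z)).mp h
        exact this x (Finset.mem_univ x)
      · have := (Finset.sum_eq_zero_iff_of_nonneg (fun y' _ => hpnn y' x z)).mp h
        exact this y (Finset.mem_univ y)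
    · exact absurd h (hZ z).ne'
  have := log_sum_ineq Finset.univ (fun z => p y x z)
    (fun z => mYZ p y z * mXZ p x z / mZ p z) ha hb hab
  exact this
end

section
/- If X and Z are independent binary random variables with positive entropy and Y = (X,Z), then UI(Y;X∖Z) = I(Y;X|Z) = H(X) and SI(Y;X,Z) = CI(Y;X,Z) = 0. -/
open scoped BigOperators
open Real

noncomputable section PairAux

open scoped BigOperators
open Real

def Ppair (px pz : Fin 2 → ℝ) : Fin 2 × Fin 2 → Fin 2 → Fin 2 → ℝ :=
  fun y x z => if y = (x, z) then px x * pz z else 0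

lemma diag_sum (F : (Fin 2 × Fin 2) → Fin 2 → Fin 2 → ℝ)
    (h : ∀ y x z, y ≠ (x, z) → F y x z = 0) :
    ∑ y : Fin 2 × Fin 2, ∑ x : Fin 2, ∑ z : Fin 2, F y x z
      = ∑ x : Fin 2, ∑ z : Fin 2, F (x, z) x z := by
  rw [Finset.sum_comm]
  refine Finset.sum_congr rfl fun x _ => ?_
  rw [Finset.sum_comm]
  refine Finset.sum_congr rfl fun z _ => ?_
  exact Finset.sum_eq_single _ (fun y _ hy => h y x z hy) (by simp)

lemma diag_sum2 (F : (Fin 2 × Fin 2) → Fin 2 → ℝ)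
    (h : ∀ y x, x ≠ y.1 → F y x = 0) :
    ∑ y : Fin 2 × Fin 2, ∑ x : Fin 2, F y x = ∑ y : Fin 2 × Fin 2, F y y.1 :=
  Finset.sum_congr rfl fun y _ =>
    Finset.sum_eq_single _ (fun x _ hx => h y x hx) (by simp)

lemma keyC (a b : ℝ) (ha : 0 ≤ a) (hb : 0 ≤ b) :
    a * b * Real.log ((a * b * b) / ((a * b) * (a * b))) = -(a * b * Real.log a) := by
  rcases ha.eq_or_lt with h | h
  · simp [← h]
  rcases hb.eq_or_lt with h' | h'
  · simp [← h']
  have : (a * b * b) / ((a * b) * (a * b)) = a⁻¹ := by field_simp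
  rw [this, Real.log_inv]; ring

lemma keyM (a b : ℝ) (ha : 0 ≤ a) (hb : 0 ≤ b) :
    a * b * Real.log ((a * b) / ((a * b) * a)) = -(a * b * Real.log a) := by
  rcases ha.eq_or_lt with h | h
  · simp [← h]
  rcases hb.eq_or_lt with h' | h'
  · simp [← h']
  have : (a * b) / ((a * b) * a) = a⁻¹ := by field_simp
  rw [this, Real.log_inv]; ring

variable (px pz : Fin 2 → ℝ)

lemma mZ_P (hpx : IsDist px) (z : Fin 2) : mZ (Ppair px pz) z = pz z := by
  have h := hpx.2; rw [Fin.sum_univ_two] at h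
  fin_cases z <;>
    simp [mZ, Ppair, Fintype.sum_prod_type, Fin.sum_univ_two, Prod.ext_iff]
  · linear_combination (pz 0) * h
  · linear_combination (pz 1) * h

lemma mXZ_P (x z : Fin 2) : mXZ (Ppair px pz) x z = px x * pz z := by
  fin_cases x <;> fin_cases z <;>
    simp [mXZ, Ppair, Fintype.sum_prod_type, Fin.sum_univ_two, Prod.ext_iff]

lemma mYZ_P (x z : Fin 2) : mYZ (Ppair px pz) (x, z) z = px x * pz z := by
  fin_cases x <;> fin_cases z <;>
    simp [mYZ, Ppair, Fin.sum_univ_two, Prod.ext_iff]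

lemma mYX_P (x z x' : Fin 2) :
    mYX (Ppair px pz) (x, z) x' = if x = x' then px x * pz z else 0 := by
  fin_cases x <;> fin_cases z <;> fin_cases x' <;>
    simp [mYX, Ppair, Fin.sum_univ_two, Prod.ext_iff]

lemma rowsum_P (y : Fin 2 × Fin 2) :
    ∑ x', mYX (Ppair px pz) y x' = px y.1 * pz y.2 := by
  obtain ⟨a, b⟩ := y
  rw [Fin.sum_univ_two, mYX_P, mYX_P]
  fin_cases a <;> simp

lemma colsum_P (hpz : IsDist pz) (x : Fin 2) :
    ∑ y' : Fin 2 × Fin 2, mYX (Ppair px pz) y' x = px x := by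
  have h := hpz.2; rw [Fin.sum_univ_two] at h
  rw [Fintype.sum_prod_type]
  simp only [Fin.sum_univ_two, mYX_P]
  fin_cases x <;> simp <;>
    [linear_combination (px 0) * h; linear_combination (px 1) * h]

lemma final_sum (hpz : IsDist pz) :
    (∑ x : Fin 2, ∑ z : Fin 2, -(px x * pz z * Real.log (px x))) = entropy px := by
  have h := hpz.2; rw [Fin.sum_univ_two] at h
  rw [entropy]
  simp only [Fin.sum_univ_two]
  linear_combination (-(px 0 * Real.log (px 0)) - px 1 * Real.log (px 1)) * h

lemma cmi_P (hpx : IsDist px) (hpz : IsDist pz) :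
    CMI_YX_gZ (Ppair px pz) = entropy px := by
  rw [CMI_YX_gZ]
  refine (diag_sum _ fun y x z hy => by simp [Ppair, hy]).trans ?_
  rw [← final_sum px pz hpz]
  refine Finset.sum_congr rfl fun x _ => Finset.sum_congr rfl fun z _ => ?_
  rw [mZ_P px pz hpx, mYZ_P, mXZ_P, show Ppair px pz (x, z) x z = px x * pz z by simp [Ppair]]
  exact keyC _ _ (hpx.1 x) (hpz.1 z)

lemma mi2_P (hpx : IsDist px) (hpz : IsDist pz) :
    MI2 (mYX (Ppair px pz)) = entropy px := by
  rw [MI2]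
  refine (diag_sum2 _ fun y x hx => ?_).trans ?_
  · obtain ⟨a, b⟩ := y
    rw [mYX_P]
    simp at hx
    simp [Ne.symm hx]
  · rw [← final_sum px pz hpz, Fintype.sum_prod_type]
    refine Finset.sum_congr rfl fun x _ => Finset.sum_congr rfl fun z _ => ?_
    rw [rowsum_P, colsum_P px pz hpz]
    have : mYX (Ppair px pz) (x, z) (x, z).1 = px x * pz z := by rw [mYX_P]; simp
    rw [this]
    exact keyM _ _ (hpx.1 x) (hpz.1 z)

lemma pmf_P (hpx : IsDist px) (hpz : IsDist pz) : IsPMF3 (Ppair px pz) := by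
  constructor
  · intro y x z
    dsimp [Ppair]
    split
    · exact mul_nonneg (hpx.1 x) (hpz.1 z)
    · exact le_rfl
  · have hx := hpx.2; rw [Fin.sum_univ_two] at hx
    have hz := hpz.2; rw [Fin.sum_univ_two] at hz
    simp [Ppair, Fintype.sum_prod_type, Fin.sum_univ_two, Prod.ext_iff]
    linear_combination (pz 0 + pz 1) * hx + hz

lemma deltaP_P (hpx : IsDist px) (hpz : IsDist pz) :
    deltaP (Ppair px pz) = {Ppair px pz} := by
  ext q
  simp only [deltaP, Set.mem_setOf_eq, Set.mem_singleton_iff]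
  constructor
  · rintro ⟨⟨hq0, _⟩, h1, h2⟩
    have hax : ∀ a b x z : Fin 2, a ≠ x → q (a, b) x z = 0 := by
      intro a b x z hne
      have hs : ∑ z', q (a, b) x z' = 0 := by
        have h := congrFun (congrFun h1 (a, b)) x
        rw [show mYX q (a,b) x = ∑ z', q (a,b) x z' from rfl] at h
        rw [h]
        refine Finset.sum_eq_zero fun z' _ => ?_
        simp only [mYX, Ppair]
        exact if_neg fun h => hne (congrArg Prod.fst h)
      have := (Finset.sum_eq_zero_iff_of_nonneg fun z' _ => hq0 (a, b) x z').mp hs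
      exact this z (Finset.mem_univ z)
    have hbz : ∀ a b x z : Fin 2, b ≠ z → q (a, b) x z = 0 := by
      intro a b x z hne
      have hs : ∑ x', q (a, b) x' z = 0 := by
        have h := congrFun (congrFun h2 (a, b)) z
        rw [show mYZ q (a,b) z = ∑ x', q (a,b) x' z from rfl] at h
        rw [h]
        refine Finset.sum_eq_zero fun x' _ => ?_
        simp only [mYZ, Ppair]
        exact if_neg fun h => hne (congrArg Prod.snd h)
      have := (Finset.sum_eq_zero_iff_of_nonneg fun x' _ => hq0 (a, b) x' z).mp hs
      exact this x (Finset.mem_univ x)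
    funext y x z
    obtain ⟨a, b⟩ := y
    by_cases h1' : a = x
    · by_cases h2' : b = z
      · subst h1'; subst h2'
        have h := congrFun (congrFun h1 (a, b)) a
        rw [show mYX q (a,b) a = ∑ z', q (a,b) a z' from rfl,
            show mYX (Ppair px pz) (a,b) a = ∑ z', Ppair px pz (a,b) a z' from rfl,
            Finset.sum_eq_single b (fun z' _ hz' => hbz a b a z' (Ne.symm hz')) (by simp),
            Finset.sum_eq_single b
              (fun z' _ hz' => by simp [Ppair, Prod.ext_iff, Ne.symm hz'])
              (by simp)] at h
        exact h
      · rw [hbz a b x z h2']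
        simp [Ppair, Prod.ext_iff, h2']
    · rw [hax a b x z h1']
      simp [Ppair, Prod.ext_iff, h1']
  · rintro rfl
    exact ⟨pmf_P px pz hpx hpz, rfl, rfl⟩

lemma uix_P (hpx : IsDist px) (hpz : IsDist pz) :
    UIX (Ppair px pz) = CMI_YX_gZ (Ppair px pz) := by
  have hset : {r : ℝ | ∃ q ∈ deltaP (Ppair px pz), r = CMI_YX_gZ q}
      = {CMI_YX_gZ (Ppair px pz)} := by
    rw [deltaP_P px pz hpx hpz]
    ext r; simp [eq_comm]
  rw [UIX, hset, csInf_singleton]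

end PairAux

/-- purely unique interaction. If `X, Z` are independent binary variables
with positive entropy and `Y = (X, Z)`, then `UI(Y;X∖Z) = I(Y;X|Z) = H(X)` and
`SI = CI = 0`. -/
theorem pair_decomposition
    (px pz : Fin 2 → ℝ) (hpx : IsDist px) (hpz : IsDist pz)
    (hx : 0 < entropy px) (hz : 0 < entropy pz) :
    UIX (fun (y : Fin 2 × Fin 2) (x : Fin 2) (z : Fin 2) =>
        if y = (x, z) then px x * pz z else 0) =
      CMI_YX_gZ (fun (y : Fin 2 × Fin 2) (x : Fin 2) (z : Fin 2) =>
        if y = (x, z) then px x * pz z else 0) ∧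
    CMI_YX_gZ (fun (y : Fin 2 × Fin 2) (x : Fin 2) (z : Fin 2) =>
        if y = (x, z) then px x * pz z else 0) = entropy px ∧
    MI2 (mYX (fun (y : Fin 2 × Fin 2) (x : Fin 2) (z : Fin 2) =>
        if y = (x, z) then px x * pz z else 0)) -
      UIX (fun (y : Fin 2 × Fin 2) (x : Fin 2) (z : Fin 2) =>
        if y = (x, z) then px x * pz z else 0) = 0 ∧
    CMI_YX_gZ (fun (y : Fin 2 × Fin 2) (x : Fin 2) (z : Fin 2) =>
        if y = (x, z) then px x * pz z else 0) -
      UIX (fun (y : Fin 2 × Fin 2) (x : Fin 2) (z : Fin 2) =>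
        if y = (x, z) then px x * pz z else 0) = 0 := by
  have hP : (fun (y : Fin 2 × Fin 2) (x : Fin 2) (z : Fin 2) =>
      if y = (x, z) then px x * pz z else 0) = Ppair px pz := rfl
  rw [hP]
  have h1 := uix_P px pz hpx hpz
  have h2 := cmi_P px pz hpx hpz
  have h3 := mi2_P px pz hpx hpz
  exact ⟨h1, h2, by rw [h1, h2, h3]; ring, by rw [h1]; ring⟩
end

section
/- For any zero-synergy distribution Q⁰ = P_{YX} × e_{Z|X} (Markov chain Y−X−Z) of finite random variables, the unique-information distortion term satisfies UI_{Q⁰}(Y;X∖Z) = I_{Q⁰}(Y;X) − I_{Q⁰}(Y;Z) = I_P(Y;X) − I_{Q⁰}(Y;Z); consequently minimizing UI_{Q⁰}(Y;X∖Z) + β I_{Q⁰}(Z;X) over encoders e is equivalent to maximizing I_{Q⁰}(Y;Z) − β I_{Q⁰}(Z;X) (the classical information bottleneck). -/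
open scoped BigOperators
open Real

section Aux

private lemma sum_pos_of_mem' {A : Type*} [Fintype A] {f : A → ℝ}
    (h0 : ∀ a, 0 ≤ f a) {a : A} (ha : 0 < f a) : 0 < ∑ b, f b :=
  lt_of_lt_of_le ha (Finset.single_le_sum (fun b _ => h0 b) (Finset.mem_univ a))

variable {X Y Z : Type*} [Fintype X] [Fintype Y] [Fintype Z]

private lemma pos_marginals {q : Y → X → Z → ℝ} (hq : ∀ y x z, 0 ≤ q y x z)
    {y : Y} {x : X} {z : Z} (h : 0 < q y x z) :
    0 < mYX q y x ∧ 0 < mYZ q y z ∧ 0 < mXZ q x z ∧ 0 < mX q x ∧ 0 < mY q y ∧ 0 < mZ q z := by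
  refine ⟨sum_pos_of_mem' (fun z' => hq y x z') h,
    sum_pos_of_mem' (fun x' => hq y x' z) h,
    sum_pos_of_mem' (fun y' => hq y' x z) h,
    sum_pos_of_mem' (fun y' => Finset.sum_nonneg fun z' _ => hq y' x z')
      (sum_pos_of_mem' (fun z' => hq y x z') h),
    sum_pos_of_mem' (fun x' => Finset.sum_nonneg fun z' _ => hq y x' z')
      (sum_pos_of_mem' (fun z' => hq y x z') h),
    sum_pos_of_mem' (fun y' => Finset.sum_nonneg fun x' _ => hq y' x' z)
      (sum_pos_of_mem' (fun x' => hq y x' z) h)⟩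

private lemma mi2_mYZ_eq (q : Y → X → Z → ℝ) :
    MI2 (mYZ q) = ∑ y, ∑ x, ∑ z, q y x z * Real.log (mYZ q y z / (mY q y * mZ q z)) := by
  unfold MI2
  have h1 : ∀ y, (∑ z', mYZ q y z') = mY q y := by
    intro y; unfold mYZ mY; exact Finset.sum_comm
  have h2 : ∀ z, (∑ y', mYZ q y' z) = mZ q z := by
    intro z; rfl
  calc (∑ y, ∑ z, mYZ q y z * Real.log (mYZ q y z / ((∑ z', mYZ q y z') * (∑ y', mYZ q y' z))))
      = ∑ y, ∑ z, ∑ x, q y x z * Real.log (mYZ q y z / (mY q y * mZ q z)) := by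
        refine Finset.sum_congr rfl fun y _ => Finset.sum_congr rfl fun z _ => ?_
        rw [h1, h2, show (mYZ q y z : ℝ) = ∑ x, q y x z from rfl, Finset.sum_mul]
    _ = _ := Finset.sum_congr rfl fun y _ => Finset.sum_comm

private lemma mi2_mYX_eq (q : Y → X → Z → ℝ) :
    MI2 (mYX q) = ∑ y, ∑ x, ∑ z, q y x z * Real.log (mYX q y x / (mY q y * mX q x)) := by
  unfold MI2
  refine Finset.sum_congr rfl fun y _ => Finset.sum_congr rfl fun x _ => ?_
  have h1 : (∑ x', mYX q y x') = mY q y := rfl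
  have h2 : (∑ y', mYX q y' x) = mX q x := rfl
  rw [h1, h2, show (mYX q y x : ℝ) = ∑ z, q y x z from rfl, Finset.sum_mul]

private lemma decomp1 (q : Y → X → Z → ℝ) (hq : ∀ y x z, 0 ≤ q y x z) :
    CMI_YX_gZ q = MI_Y_XZ q - MI2 (mYZ q) := by
  rw [mi2_mYZ_eq]
  unfold CMI_YX_gZ MI_Y_XZ
  rw [← Finset.sum_sub_distrib]
  refine Finset.sum_congr rfl fun y _ => ?_
  rw [← Finset.sum_sub_distrib]
  refine Finset.sum_congr rfl fun x _ => ?_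
  rw [← Finset.sum_sub_distrib]
  refine Finset.sum_congr rfl fun z _ => ?_
  rcases (hq y x z).lt_or_eq with h | h
  · obtain ⟨hYX, hYZ, hXZ, hX, hY, hZ⟩ := pos_marginals hq h
    have e1 : (q y x z * mZ q z) / (mYZ q y z * mXZ q x z)
        = (q y x z / (mY q y * mXZ q x z)) / (mYZ q y z / (mY q y * mZ q z)) := by
      field_simp
    rw [e1, Real.log_div (by positivity) (by positivity)]
    ring
  · simp [← h]

private lemma decomp2 (q : Y → X → Z → ℝ) (hq : ∀ y x z, 0 ≤ q y x z) :
    MI_Y_XZ q = MI2 (mYX q) + CMI_YZ_gX q := by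
  rw [mi2_mYX_eq]
  unfold CMI_YZ_gX MI_Y_XZ
  rw [← Finset.sum_add_distrib]
  refine Finset.sum_congr rfl fun y _ => ?_
  rw [← Finset.sum_add_distrib]
  refine Finset.sum_congr rfl fun x _ => ?_
  rw [← Finset.sum_add_distrib]
  refine Finset.sum_congr rfl fun z _ => ?_
  rcases (hq y x z).lt_or_eq with h | h
  · obtain ⟨hYX, hYZ, hXZ, hX, hY, hZ⟩ := pos_marginals hq h
    have e1 : q y x z / (mY q y * mXZ q x z)
        = (mYX q y x / (mY q y * mX q x)) * ((q y x z * mX q x) / (mYX q y x * mXZ q x z)) := by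
      field_simp
    rw [e1, Real.log_mul (by positivity) (by positivity)]
    ring
  · simp [← h]

private lemma cmi_nonneg (q : Y → X → Z → ℝ) (hq : ∀ y x z, 0 ≤ q y x z) :
    0 ≤ CMI_YZ_gX q := by
  set r : Y → X → Z → ℝ :=
    fun y x z => if mX q x = 0 then 0 else mYX q y x * mXZ q x z / mX q x with hrdef
  have hr0 : ∀ y x z, 0 ≤ r y x z := by
    intro y x z
    have hX : 0 ≤ mX q x :=
      Finset.sum_nonneg fun y' _ => Finset.sum_nonneg fun z' _ => hq y' x z'
    have hYX : 0 ≤ mYX q y x := Finset.sum_nonneg fun z' _ => hq y x z'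
    have hXZ : 0 ≤ mXZ q x z := Finset.sum_nonneg fun y' _ => hq y' x z
    simp only [hrdef]
    split
    · exact le_rfl
    · positivity
  have hterm : ∀ y x z, q y x z - r y x z ≤
      q y x z * Real.log ((q y x z * mX q x) / (mYX q y x * mXZ q x z)) := by
    intro y x z
    rcases (hq y x z).lt_or_eq with h | h
    · obtain ⟨hYX, hYZ, hXZ, hX, hY, hZ⟩ := pos_marginals hq h
      have hr : r y x z = mYX q y x * mXZ q x z / mX q x := by
        simp [hrdef, ne_of_gt hX]
      have hrpos : 0 < r y x z := by rw [hr]; positivity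
      have harg : (q y x z * mX q x) / (mYX q y x * mXZ q x z) = q y x z / r y x z := by
        rw [hr]; field_simp
      rw [harg, Real.log_div (ne_of_gt h) (ne_of_gt hrpos)]
      have h1 : Real.log (r y x z / q y x z) ≤ r y x z / q y x z - 1 :=
        Real.log_le_sub_one_of_pos (by positivity)
      rw [Real.log_div (ne_of_gt hrpos) (ne_of_gt h)] at h1
      have h2 : q y x z * (r y x z / q y x z) = r y x z := by field_simp
      nlinarith [mul_le_mul_of_nonneg_left h1 (le_of_lt h)]
    · simp only [← h]
      simpa using hr0 y x z
  have hsum : (∑ y, ∑ x, ∑ z, (q y x z - r y x z)) ≤ CMI_YZ_gX q := by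
    unfold CMI_YZ_gX
    refine Finset.sum_le_sum fun y _ => Finset.sum_le_sum fun x _ => Finset.sum_le_sum fun z _ => hterm y x z
  have hrsum : (∑ y, ∑ x, ∑ z, r y x z) = ∑ y, ∑ x, ∑ z, q y x z := by
    rw [Finset.sum_comm (s := Finset.univ) (t := Finset.univ), Finset.sum_comm (s := Finset.univ) (t := Finset.univ) (f := fun y x => ∑ z, q y x z)]
    refine Finset.sum_congr rfl fun x _ => ?_
    have hq' : (∑ y, ∑ z, q y x z) = mX q x := rfl
    rw [hq']
    by_cases hx : mX q x = 0
    · simp [hrdef, hx]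
    · simp only [hrdef, hx, if_false]
      have e1 : (∑ y, ∑ z, mYX q y x * mXZ q x z / mX q x)
          = (∑ y, mYX q y x) * (∑ z, mXZ q x z) / mX q x := by
        rw [Finset.sum_mul_sum, Finset.sum_div]
        exact Finset.sum_congr rfl fun y _ => by rw [Finset.sum_div]
      rw [e1]
      have h2 : (∑ y, mYX q y x) = mX q x := rfl
      have h3 : (∑ z, mXZ q x z) = mX q x := by
        unfold mXZ mX; exact Finset.sum_comm
      rw [h2, h3]
      field_simp
  have : (0:ℝ) ≤ ∑ y, ∑ x, ∑ z, (q y x z - r y x z) := by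
    simp only [Finset.sum_sub_distrib]
    rw [hrsum]
    simp
  linarith

private lemma markov_zero (pYX : Y → X → ℝ) (hp0 : ∀ y x, 0 ≤ pYX y x)
    (e : X → Z → ℝ) (he : IsChannel e) :
    CMI_YZ_gX (fun y x z => pYX y x * e x z) = 0 := by
  set q : Y → X → Z → ℝ := fun y x z => pYX y x * e x z with hqdef
  have hq : ∀ y x z, 0 ≤ q y x z := fun y x z => mul_nonneg (hp0 y x) (he.1 x z)
  unfold CMI_YZ_gX
  refine Finset.sum_eq_zero fun y _ => Finset.sum_eq_zero fun x _ => Finset.sum_eq_zero fun z _ => ?_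
  rcases (hq y x z).lt_or_eq with h | h
  · have h' : 0 < pYX y x * e x z := h
    obtain ⟨hpx, hez⟩ : 0 < pYX y x ∧ 0 < e x z := by
      rcases mul_pos_iff.mp h' with hh | ⟨ha, _⟩
      · exact hh
      · exact absurd ha (not_lt.mpr (hp0 y x))
    have hmYX : mYX q y x = pYX y x := by
      simp [mYX, hqdef, ← Finset.mul_sum, he.2 x]
    have hmX : mX q x = ∑ y', pYX y' x := by
      simp [mX, hqdef, ← Finset.mul_sum, he.2 x]
    have hmXZ : mXZ q x z = (∑ y', pYX y' x) * e x z := by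
      simp [mXZ, hqdef, Finset.sum_mul]
    have hpXx : 0 < ∑ y', pYX y' x :=
      sum_pos_of_mem' (fun y' => hp0 y' x) hpx
    have harg : (q y x z * mX q x) / (mYX q y x * mXZ q x z) = 1 := by
      rw [hmYX, hmX, hmXZ, hqdef]
      field_simp
    rw [harg, Real.log_one, mul_zero]
  · rw [← h, zero_mul]

private lemma UIX_key (pYX : Y → X → ℝ)
    (hp : (∀ y x, 0 ≤ pYX y x) ∧ ∑ y, ∑ x, pYX y x = 1)
    (e : X → Z → ℝ) (he : IsChannel e) :
    UIX (fun y x z => pYX y x * e x z) =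
      MI2 (mYX (fun y x z => pYX y x * e x z)) -
        MI2 (mYZ (fun y x z => pYX y x * e x z)) := by
  set Q : Y → X → Z → ℝ := fun y x z => pYX y x * e x z with hQdef
  have hQ0 : ∀ y x z, 0 ≤ Q y x z := fun y x z => mul_nonneg (hp.1 y x) (he.1 x z)
  have hQsum : ∑ y, ∑ x, ∑ z, Q y x z = 1 := by
    calc (∑ y, ∑ x, ∑ z, Q y x z) = ∑ y, ∑ x, pYX y x := by
          refine Finset.sum_congr rfl fun y _ => Finset.sum_congr rfl fun x _ => ?_
          simp [hQdef, ← Finset.mul_sum, he.2 x]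
      _ = 1 := hp.2
  have hQP : IsPMF3 Q := ⟨hQ0, hQsum⟩
  have hmem : Q ∈ deltaP Q := ⟨hQP, rfl, rfl⟩
  have hval : CMI_YX_gZ Q = MI2 (mYX Q) - MI2 (mYZ Q) := by
    rw [decomp1 Q hQ0, decomp2 Q hQ0, markov_zero pYX hp.1 e he]
    ring
  set c : ℝ := MI2 (mYX Q) - MI2 (mYZ Q) with hcdef
  have hlb : ∀ r ∈ {r : ℝ | ∃ q ∈ deltaP Q, r = CMI_YX_gZ q}, c ≤ r := by
    rintro r ⟨q, ⟨hqP, hq1, hq2⟩, rfl⟩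
    rw [decomp1 q hqP.1, decomp2 q hqP.1, hq1, hq2]
    have := cmi_nonneg q hqP.1
    rw [hcdef]
    linarith
  have hcm : c ∈ {r : ℝ | ∃ q ∈ deltaP Q, r = CMI_YX_gZ q} := ⟨Q, hmem, hval.symm⟩
  exact le_antisymm (csInf_le ⟨c, hlb⟩ hcm) (le_csInf ⟨c, hcm⟩ hlb)

private lemma mYX_eq (pYX : Y → X → ℝ) (e : X → Z → ℝ) (he : IsChannel e) :
    mYX (fun y x z => pYX y x * e x z) = pYX := by
  funext y x
  simp [mYX, ← Finset.mul_sum, he.2 x]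

end Aux

/-- for zero-synergy distributions `Qⁱ = P_{YX} × eⁱ_{Z|X}`,
`UI_{Q}(Y;X∖Z) = I_Q(Y;X) − I_Q(Y;Z) = I_P(Y;X) − I_Q(Y;Z)`; hence minimizing
`UI_Q(Y;X∖Z) + β I_Q(Z;X)` over encoders is equivalent to maximizing
`I_Q(Y;Z) − β I_Q(Z;X)` (the classical information bottleneck). -/
theorem UIB_equiv_classical_IB
    {X Y Z : Type*} [Fintype X] [Fintype Y] [Fintype Z]
    (pYX : Y → X → ℝ) (hp : (∀ y x, 0 ≤ pYX y x) ∧ ∑ y, ∑ x, pYX y x = 1)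
    (e1 e2 : X → Z → ℝ) (he1 : IsChannel e1) (he2 : IsChannel e2) (beta : ℝ) :
    UIX (fun y x z => pYX y x * e1 x z) =
      MI2 (mYX (fun y x z => pYX y x * e1 x z)) -
        MI2 (mYZ (fun y x z => pYX y x * e1 x z)) ∧
    MI2 (mYX (fun y x z => pYX y x * e1 x z)) = MI2 pYX ∧
    (UIX (fun y x z => pYX y x * e1 x z) +
        beta * MI2 (mXZ (fun y x z => pYX y x * e1 x z)) ≤
      UIX (fun y x z => pYX y x * e2 x z) +
        beta * MI2 (mXZ (fun y x z => pYX y x * e2 x z)) ↔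
      MI2 (mYZ (fun y x z => pYX y x * e2 x z)) -
          beta * MI2 (mXZ (fun y x z => pYX y x * e2 x z)) ≤
        MI2 (mYZ (fun y x z => pYX y x * e1 x z)) -
          beta * MI2 (mXZ (fun y x z => pYX y x * e1 x z))) := by
  have k1 := UIX_key pYX hp e1 he1
  have k2 := UIX_key pYX hp e2 he2
  have m1 : MI2 (mYX (fun y x z => pYX y x * e1 x z)) = MI2 pYX := by
    rw [mYX_eq pYX e1 he1]
  have m2 : MI2 (mYX (fun y x z => pYX y x * e2 x z)) = MI2 pYX := by
    rw [mYX_eq pYX e2 he2]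
  refine ⟨k1, m1, ?_⟩
  rw [k1, k2, m1, m2]
  constructor <;> intro h <;> linarith
end
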